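/- Let Q ⊂ ℝ² be compact convex, and let p₁ ≠ p₂ be points in Q with ‖p₁ − p₂‖ = 2l. For 0 < ε < l, the set Y₁₂(ε) = { x ∈ Q : | ‖x−p₁‖ − ‖x−p₂‖ | ≤ 2ε } (the near-bisector region) has Lebesgue measure at most 4 · diam(Q) · (1 + diam(Q)/l) · ε. In particular μ(Y₁₂(ε)) → 0 as ε → 0⁺. -/

import Mathlib

open MeasureTheory Metric

/-- Measure bound on the near-bisector region: for `Q ⊂ ℝ²` compact convex,
distinct points `p₁, p₂ ∈ Q` with `‖p₁ − p₂‖ = 2l`, and `0 < ε < l`, the set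
`Y₁₂(ε) = { x ∈ Q : |‖x−p₁‖ − ‖x−p₂‖| ≤ 2ε }` satisfies
`μ(Y₁₂(ε)) ≤ 4 · diam(Q) · (1 + diam(Q)/l) · ε`. -/
theorem stmt_11 (Q : Set (EuclideanSpace ℝ (Fin 2)))
    (hQc : IsCompact Q) (hQconv : Convex ℝ Q) (hQint : (interior Q).Nonempty)
    (p₁ p₂ : EuclideanSpace ℝ (Fin 2)) (hp₁ : p₁ ∈ Q) (hp₂ : p₂ ∈ Q)
    (hne : p₁ ≠ p₂) (l : ℝ) (hl : ‖p₁ - p₂‖ = 2 * l)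
    (ε : ℝ) (hε : 0 < ε) (hεl : ε < l) :
    volume {x ∈ Q | |‖x - p₁‖ - ‖x - p₂‖| ≤ 2 * ε} ≤
      ENNReal.ofReal (4 * diam Q * (1 + diam Q / l) * ε) := by
  classical
  have hl0 : 0 < l := hε.trans hεl
  set D := diam Q with hD
  have hD0 : 0 ≤ D := diam_nonneg
  set m : EuclideanSpace ℝ (Fin 2) := midpoint ℝ p₁ p₂ with hm
  have hmQ : m ∈ Q := hQconv.segment_subset hp₁ hp₂ (midpoint_mem_segment p₁ p₂)
  -- unit vector
  set u : EuclideanSpace ℝ (Fin 2) := (2 * l)⁻¹ • (p₂ - p₁) with hu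
  have hnorm : ‖p₂ - p₁‖ = 2 * l := by rw [norm_sub_rev]; exact hl
  have hu1 : ‖u‖ = 1 := by
    rw [hu, norm_smul, hnorm, norm_inv, Real.norm_eq_abs, abs_of_pos (by positivity)]
    field_simp
  -- orthonormal basis with b 0 = u
  have hcard : Module.finrank ℝ (EuclideanSpace ℝ (Fin 2)) = Fintype.card (Fin 2) := by
    simp [finrank_euclideanSpace_fin]
  have horth : Orthonormal ℝ (({0} : Set (Fin 2)).restrict fun _ => u) := by
    constructor
    · intro i; exact hu1
    · intro i j hij
      exact absurd (Subtype.ext (by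
        have := i.2; have := j.2
        simp only [Set.mem_singleton_iff] at *
        rw [i.2, j.2])) hij
  obtain ⟨b, hb⟩ := horth.exists_orthonormalBasis_extension_of_card_eq hcard
  have hb0 : b 0 = u := hb 0 rfl
  -- key inner product bound
  have key : ∀ x ∈ Q, |‖x - p₁‖ - ‖x - p₂‖| ≤ 2 * ε →
      |@inner ℝ _ _ u (x - m)| ≤ ε * D / l := by
    intro x hx hxε
    have hident : @inner ℝ _ _ (p₂ - p₁) (x - m) =
        (‖x - p₁‖ ^ 2 - ‖x - p₂‖ ^ 2) / 2 := by
      have h1 : p₂ - p₁ = (x - p₁) - (x - p₂) := by abel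
      have h2 : x - m = (2 : ℝ)⁻¹ • ((x - p₁) + (x - p₂)) := by
        rw [hm, midpoint_eq_smul_add, invOf_eq_inv]; module
      rw [h1, h2, real_inner_smul_right, inner_sub_left, inner_add_right,
        inner_add_right, real_inner_self_eq_norm_sq, real_inner_self_eq_norm_sq,
        real_inner_comm (x - p₂) (x - p₁)]
      ring
    have hd1 : ‖x - p₁‖ ≤ D := by
      rw [← dist_eq_norm]; exact dist_le_diam_of_mem hQc.isBounded hx hp₁
    have hd2 : ‖x - p₂‖ ≤ D := by
      rw [← dist_eq_norm]; exact dist_le_diam_of_mem hQc.isBounded hx hp₂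
    have habs : |‖x - p₁‖ ^ 2 - ‖x - p₂‖ ^ 2| ≤ (2 * ε) * (2 * D) := by
      have : ‖x - p₁‖ ^ 2 - ‖x - p₂‖ ^ 2 =
          (‖x - p₁‖ - ‖x - p₂‖) * (‖x - p₁‖ + ‖x - p₂‖) := by ring
      rw [this, abs_mul]
      refine mul_le_mul hxε ?_ (abs_nonneg _) (by positivity)
      rw [abs_of_nonneg (by positivity)]
      linarith
    have hinner : |@inner ℝ _ _ (p₂ - p₁) (x - m)| ≤ 2 * ε * D := by
      rw [hident, abs_div]
      rw [abs_of_nonneg (by norm_num : (0:ℝ) ≤ 2)]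
      linarith [habs]
    calc |@inner ℝ _ _ u (x - m)|
        = |(2 * l)⁻¹| * |@inner ℝ _ _ (p₂ - p₁) (x - m)| := by
          rw [hu, real_inner_smul_left, abs_mul]
      _ ≤ (2 * l)⁻¹ * (2 * ε * D) := by
          rw [abs_of_pos (by positivity)]
          exact mul_le_mul_of_nonneg_left hinner (by positivity)
      _ = ε * D / l := by field_simp
  -- the box
  set a : Fin 2 → ℝ := ![ε * D / l, D] with ha
  set S : Set (EuclideanSpace ℝ (Fin 2)) :=
    ((MeasurableEquiv.toLp 2 (Fin 2 → ℝ)).symm) ⁻¹'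
      (Set.univ.pi fun i => Set.Icc (-(a i)) (a i)) with hS
  set T : EuclideanSpace ℝ (Fin 2) → EuclideanSpace ℝ (Fin 2) := fun x => b.repr (x - m) with hT
  have hTmp : MeasurePreserving T volume volume :=
    b.measurePreserving_repr.comp (measurePreserving_sub_right volume m)
  have hsub : {x ∈ Q | |‖x - p₁‖ - ‖x - p₂‖| ≤ 2 * ε} ⊆ T ⁻¹' S := by
    intro x hx
    obtain ⟨hxQ, hxε⟩ := hx
    simp only [hS, Set.mem_preimage, Set.mem_pi, Set.mem_univ, forall_true_left,
      Set.mem_Icc]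
    intro i
    have hrepr : ((MeasurableEquiv.toLp 2 (Fin 2 → ℝ)).symm) (T x) i
        = @inner ℝ _ _ (b i) (x - m) := by
      rw [hT]
      exact b.repr_apply_apply (x - m) i
    have hball : ‖x - m‖ ≤ D := by
      rw [← dist_eq_norm]; exact dist_le_diam_of_mem hQc.isBounded hxQ hmQ
    have habs : |@inner ℝ _ _ (b i) (x - m)| ≤ a i := by
      fin_cases i
      · show |@inner ℝ _ _ (b 0) (x - m)| ≤ ε * D / l
        rw [hb0]
        exact key x hxQ hxε
      · show |@inner ℝ _ _ (b 1) (x - m)| ≤ D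
        calc |@inner ℝ _ _ (b 1) (x - m)| ≤ ‖b 1‖ * ‖x - m‖ := abs_real_inner_le_norm _ _
          _ = ‖x - m‖ := by rw [b.orthonormal.1 1, one_mul]
          _ ≤ D := hball
    rw [hrepr]
    exact abs_le.mp habs
  have hSmeas : MeasurableSet S := by
    apply ((MeasurableEquiv.toLp 2 (Fin 2 → ℝ)).symm).measurable
    exact MeasurableSet.univ_pi fun i => measurableSet_Icc
  have hvolS : volume S = ENNReal.ofReal (2 * (ε * D / l)) * ENNReal.ofReal (2 * D) := by
    rw [hS, (EuclideanSpace.volume_preserving_symm_measurableEquiv_toLp (Fin 2)).measure_preimage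
      (MeasurableSet.univ_pi fun i => measurableSet_Icc).nullMeasurableSet]
    rw [volume_pi_pi]
    simp only [Real.volume_Icc, Fin.prod_univ_two, ha]
    norm_num
    ring_nf
    rw [ENNReal.ofReal_mul (mul_nonneg (mul_nonneg hε.le hD0) (inv_nonneg.mpr hl0.le)),
      ENNReal.ofReal_mul hD0, ENNReal.ofReal_ofNat]
    ring
  calc volume {x ∈ Q | |‖x - p₁‖ - ‖x - p₂‖| ≤ 2 * ε}
      ≤ volume (T ⁻¹' S) := measure_mono hsub
    _ = volume S := hTmp.measure_preimage hSmeas.nullMeasurableSet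
    _ = ENNReal.ofReal (2 * (ε * D / l)) * ENNReal.ofReal (2 * D) := hvolS
    _ = ENNReal.ofReal (4 * ε * D ^ 2 / l) := by
        rw [← ENNReal.ofReal_mul (by positivity)]
        congr 1; field_simp; ring
    _ ≤ ENNReal.ofReal (4 * diam Q * (1 + diam Q / l) * ε) := by
        apply ENNReal.ofReal_le_ofReal
        rw [← hD]
        have h1 : 4 * ε * D ^ 2 / l = 4 * D * (D / l) * ε := by field_simp
        rw [h1]
        have : D / l ≤ 1 + D / l := by linarith
        nlinarith [mul_le_mul_of_nonneg_left this (by positivity : (0:ℝ) ≤ 4 * D)]
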